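/- Let f : ℝ → ℝ be given by f(x) = sin(x)/x for x ≠ 0 and f(0) = 1, and let a₁,…,a_N be pairwise distinct positive reals. Then x ↦ f(a₁x), …, x ↦ f(a_N x) are linearly independent on every interval (0, ε). -/

import Mathlib

open Set

lemma analyticOnNhd_rsin : AnalyticOnNhd ℝ Real.sin univ := by
  have h : Real.sin = fun x : ℝ => (Complex.sin x).re := by
    ext x; rw [Complex.sin_ofReal_re]
  rw [h]
  intro x _
  have h1 : AnalyticAt ℝ (fun z : ℝ => Complex.sin z) x := by
    have := (Complex.differentiable_sin.analyticAt (x : ℂ)).restrictScalars (𝕜 := ℝ)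
    exact this.comp (Complex.ofRealCLM.analyticAt x)
  exact (Complex.reCLM.analyticAt _).comp h1

lemma sin_step {N : ℕ} (a d : Fin N → ℝ)
    (h : ∀ x : ℝ, ∑ k, d k * Real.sin (a k * x) = 0) :
    ∀ x : ℝ, ∑ k, (d k * a k) * Real.cos (a k * x) = 0 := by
  intro x
  have hd : HasDerivAt (fun y : ℝ => ∑ k, d k * Real.sin (a k * y))
      (∑ k, (d k * a k) * Real.cos (a k * x)) x := by
    apply HasDerivAt.fun_sum
    intro k _
    have h1 : HasDerivAt (fun y : ℝ => a k * y) (a k) x := by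
      simpa using (hasDerivAt_id x).const_mul (a k)
    have h2 := (Real.hasDerivAt_sin (a k * x)).comp x h1
    have h3 := h2.const_mul (d k)
    simpa [Function.comp, mul_comm, mul_assoc, mul_left_comm] using h3
  have h0 : HasDerivAt (fun y : ℝ => ∑ k, d k * Real.sin (a k * y)) 0 x := by
    have he : (fun y : ℝ => ∑ k, d k * Real.sin (a k * y)) = fun _ => (0:ℝ) := funext h
    rw [he]; exact hasDerivAt_const x 0
  exact hd.unique h0

lemma cos_step {N : ℕ} (a d : Fin N → ℝ)
    (h : ∀ x : ℝ, ∑ k, d k * Real.cos (a k * x) = 0) :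
    ∀ x : ℝ, ∑ k, (d k * a k) * Real.sin (a k * x) = 0 := by
  intro x
  have hd : HasDerivAt (fun y : ℝ => ∑ k, d k * Real.cos (a k * y))
      (-∑ k, (d k * a k) * Real.sin (a k * x)) x := by
    rw [← Finset.sum_neg_distrib]
    apply HasDerivAt.fun_sum
    intro k _
    have h1 : HasDerivAt (fun y : ℝ => a k * y) (a k) x := by
      simpa using (hasDerivAt_id x).const_mul (a k)
    have h2 := (Real.hasDerivAt_cos (a k * x)).comp x h1
    have h3 := h2.const_mul (d k)
    have heq : d k * (-Real.sin (a k * x) * a k) = -(d k * a k * Real.sin (a k * x)) := by ring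
    rw [← heq]
    simpa [Function.comp] using h3
  have h0 : HasDerivAt (fun y : ℝ => ∑ k, d k * Real.cos (a k * y)) 0 x := by
    have he : (fun y : ℝ => ∑ k, d k * Real.cos (a k * y)) = fun _ => (0:ℝ) := funext h
    rw [he]; exact hasDerivAt_const x 0
  have := hd.unique h0
  linarith [this]

theorem sinc_dilates_linear_independent
    (f : ℝ → ℝ) (hf : ∀ x : ℝ, f x = if x = 0 then 1 else Real.sin x / x)
    (N : ℕ) (a : Fin N → ℝ)
    (ha_pos : ∀ k, 0 < a k) (ha_inj : Function.Injective a) :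
    ∀ ε > (0 : ℝ), ∀ c : Fin N → ℝ,
      (∀ x ∈ Ioo (0 : ℝ) ε, ∑ k, c k * f (a k * x) = 0) →
      ∀ k, c k = 0 := by
  intro ε hε c hc
  set d : Fin N → ℝ := fun k => c k / a k with hd_def
  set g : ℝ → ℝ := fun x => ∑ k, d k * Real.sin (a k * x) with hg_def
  -- g vanishes on Ioo 0 ε
  have hg0 : ∀ x ∈ Ioo (0:ℝ) ε, g x = 0 := by
    intro x hx
    have hx0 : 0 < x := hx.1
    have : g x = x * ∑ k, c k * f (a k * x) := by
      rw [hg_def, Finset.mul_sum]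
      apply Finset.sum_congr rfl
      intro k _
      have hak : a k ≠ 0 := (ha_pos k).ne'
      have hax : a k * x ≠ 0 := (mul_pos (ha_pos k) hx0).ne'
      rw [hf (a k * x), if_neg hax, hd_def]
      field_simp
    rw [this, hc x hx, mul_zero]
  -- g analytic on univ
  have hg_an : AnalyticOnNhd ℝ g univ := by
    intro x _
    apply Finset.analyticAt_fun_sum
    intro k _
    have h1 : AnalyticAt ℝ (fun y : ℝ => Real.sin (a k * y)) x := by
      have hlin : AnalyticAt ℝ (fun y : ℝ => a k * y) x :=
        (analyticAt_const).mul analyticAt_id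
      exact (analyticOnNhd_rsin _ (mem_univ _)).comp hlin
    exact analyticAt_const.mul h1
  -- identity theorem: g = 0 on ℝ
  have hgz : ∀ x : ℝ, g x = 0 := by
    have hev : g =ᶠ[nhds (ε/2)] 0 := by
      filter_upwards [Ioo_mem_nhds (by linarith : (0:ℝ) < ε/2) (by linarith : ε/2 < ε)] with y hy
      exact hg0 y hy
    have := hg_an.eqOn_zero_of_preconnected_of_eventuallyEq_zero
      isPreconnected_univ (mem_univ (ε/2)) hev
    intro x; exact this (mem_univ x)
  -- induction: all odd derivative-type sums vanish
  have key : ∀ p : ℕ, ∀ x : ℝ, ∑ k, (d k * (a k) ^ (2*p)) * Real.sin (a k * x) = 0 := by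
    intro p
    induction p with
    | zero => intro x; simpa [hg_def] using hgz x
    | succ p ih =>
      have h1 := sin_step a (fun k => d k * (a k) ^ (2*p)) ih
      have h2 := cos_step a (fun k => d k * (a k) ^ (2*p) * a k) h1
      intro x
      have := h2 x
      calc ∑ k, (d k * (a k) ^ (2*(p+1))) * Real.sin (a k * x)
          = ∑ k, (d k * (a k) ^ (2*p) * a k * a k) * Real.sin (a k * x) := by
            apply Finset.sum_congr rfl; intro k _; ring
        _ = 0 := this
  -- evaluate derivative at 0
  have hmom : ∀ p : ℕ, ∑ k, c k * ((a k)^2) ^ p = 0 := by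
    intro p
    have h1 := sin_step a (fun k => d k * (a k) ^ (2*p)) (key p)
    have := h1 0
    simp only [mul_zero, Real.cos_zero, mul_one] at this
    calc ∑ k, c k * ((a k)^2) ^ p
        = ∑ k, d k * (a k) ^ (2*p) * a k := by
          apply Finset.sum_congr rfl; intro k _
          have hak : a k ≠ 0 := (ha_pos k).ne'
          rw [← pow_mul, hd_def]
          field_simp
      _ = 0 := this
  -- Vandermonde
  set b : Fin N → ℝ := fun k => (a k)^2 with hb_def
  have hb_inj : Function.Injective b := by
    intro i j hij
    apply ha_inj
    have := hij
    simp only [hb_def] at this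
    nlinarith [ha_pos i, ha_pos j]
  have hdet : (Matrix.vandermonde b).det ≠ 0 := by
    rw [Matrix.det_vandermonde]
    apply Finset.prod_ne_zero_iff.2
    intro i _
    apply Finset.prod_ne_zero_iff.2
    intro j hj
    have : i < j := Finset.mem_Ioi.1 hj
    exact sub_ne_zero.2 fun h => absurd (hb_inj h) this.ne'
  have hvm : Matrix.vecMul c (Matrix.vandermonde b) = 0 := by
    funext p
    simpa [Matrix.vecMul, Matrix.vandermonde, dotProduct] using hmom p
  have hcz : c = 0 := by
    have h2 := congrArg (fun v => Matrix.vecMul v (Matrix.vandermonde b)⁻¹) hvm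
    simpa [Matrix.vecMul_vecMul, Matrix.mul_nonsing_inv _ (isUnit_iff_ne_zero.2 hdet),
      Matrix.vecMul_one, Matrix.zero_vecMul] using h2
  intro k; rw [hcz]; rfl
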